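/- Let k ≥ 4 be an integer, K := k - 3, and let φ be a satisfiable E3-CNF formula with m clauses C_1, …, C_m over variables x_1, …, x_n, with satisfying assignments α_start, α_end. Let y_1, …, y_K be K fresh variables and let ψ be the Ek-CNF formula over x_1,…,x_n,y_1,…,y_K whose clauses are C_j ∨ D for every j ∈ [m] and every clause D over y_1,…,y_K that contains each of y_1,…,y_K exactly once (positively or negatively); there are 2^K such D. Define β_start (resp. β_end) as α_start (resp. α_end) extended by assigning 0 to every y_i. If opt_φ(α_start ↔ α_end) = 1, then opt_ψ(β_start ↔ β_end) = 1. -/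

import Mathlib

/-- An assignment maps each Boolean variable to a truth value. -/
abbrev Assignment (V : Type) := V → Bool

/-- A literal is a variable together with a polarity (`true` = positive);
a clause is a disjunction of literals, represented as the list of its literals
(its width is the length of this list). -/
abbrev Clause (V : Type) := List (V × Bool)

/-- A CNF formula is a conjunction of clauses, represented as a list
(clauses are counted with multiplicity). -/
abbrev CNF (V : Type) := List (Clause V)

/-- An assignment satisfies a clause if it makes at least one literal true. -/
def satClause {V : Type} (α : Assignment V) (C : Clause V) : Bool :=
  C.any fun l => α l.1 == l.2

/-- An assignment satisfies a CNF formula if it satisfies every clause. -/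
def satCNF {V : Type} (α : Assignment V) (φ : CNF V) : Bool :=
  φ.all fun C => satClause α C

/-- The fraction of clauses of `φ` satisfied by `α`. -/
noncomputable def val {V : Type} (φ : CNF V) (α : Assignment V) : ℝ :=
  ((φ.filter fun C => satClause α C).length : ℝ) / (φ.length : ℝ)

/-- The number of clauses of `φ` violated by `α`. -/
def numViol {V : Type} (φ : CNF V) (α : Assignment V) : ℕ :=
  (φ.filter fun C => !satClause α C).length

/-- Two assignments differ on at most one variable. -/
def Adjacent {V : Type} (α β : Assignment V) : Prop :=
  ∀ v w, α v ≠ β v → α w ≠ β w → v = w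

/-- `seq` is a reconfiguration sequence from `s` to `e`: a nonempty finite sequence of
assignments starting at `s`, ending at `e`, in which consecutive assignments differ
on at most one variable. -/
def IsReconfSeq {V : Type} (s e : Assignment V) (seq : List (Assignment V)) : Prop :=
  seq ≠ [] ∧ seq.head? = some s ∧ seq.getLast? = some e ∧ seq.Chain' Adjacent

/-- The value of a reconfiguration sequence: the minimum of `val φ` over its members. -/
noncomputable def seqVal {V : Type} (φ : CNF V) (seq : List (Assignment V)) : ℝ :=
  sInf (val φ '' {α | α ∈ seq})

/-- `opt_φ(s ↔ e)`: the optimal (maximum) value over all reconfiguration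
sequences from `s` to `e`. -/
noncomputable def optVal {V : Type} (φ : CNF V) (s e : Assignment V) : ℝ :=
  sSup (seqVal φ '' {seq | IsReconfSeq s e seq})

section auxlemmas

variable {V : Type}

lemma val_nonneg' (φ : CNF V) (α : Assignment V) : 0 ≤ val φ α :=
  div_nonneg (Nat.cast_nonneg _) (Nat.cast_nonneg _)

lemma val_le_one' (φ : CNF V) (α : Assignment V) : val φ α ≤ 1 :=
  div_le_one_of_le₀ (by exact_mod_cast List.length_filter_le _ _) (Nat.cast_nonneg _)

lemma bddBelow_vals (φ : CNF V) (s : Set (Assignment V)) : BddBelow (val φ '' s) :=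
  ⟨0, by rintro x ⟨α, _, rfl⟩; exact val_nonneg' _ _⟩

lemma seqVal_le' (φ : CNF V) {seq : List (Assignment V)} {α : Assignment V}
    (hα : α ∈ seq) : seqVal φ seq ≤ val φ α :=
  csInf_le (bddBelow_vals _ _) ⟨α, hα, rfl⟩

lemma val_eq_one' {φ : CNF V} {α : Assignment V} (hφ : φ ≠ []) (h : satCNF α φ) :
    val φ α = 1 := by
  unfold val
  rw [List.filter_eq_self.mpr fun C hC => (List.all_eq_true.mp h) C hC, div_self]
  exact_mod_cast (List.length_pos_iff.mpr hφ).ne'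

lemma seqVal_le_one' (φ : CNF V) {seq : List (Assignment V)} (hne : seq ≠ []) :
    seqVal φ seq ≤ 1 := by
  obtain ⟨a, ha⟩ := List.exists_mem_of_ne_nil seq hne
  exact (seqVal_le' φ ha).trans (val_le_one' _ _)

lemma exists_good_seq {φ : CNF V} {s e : Assignment V}
    (hopt : optVal φ s e = 1) (hφ : φ ≠ []) :
    ∃ seq, IsReconfSeq s e seq ∧ ∀ α ∈ seq, satCNF α φ := by
  by_contra hcon
  push_neg at hcon
  have hm : 0 < (φ.length : ℝ) := by exact_mod_cast List.length_pos_iff.mpr hφ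
  have hub : ∀ x ∈ seqVal φ '' {seq | IsReconfSeq s e seq}, x ≤ 1 - 1 / (φ.length : ℝ) := by
    rintro x ⟨seq, hseq, rfl⟩
    obtain ⟨α, hαmem, hαbad⟩ := hcon seq hseq
    refine (seqVal_le' φ hαmem).trans ?_
    have hlt : (φ.filter fun C => satClause α C).length < φ.length := by
      rw [List.length_filter_lt_length_iff_exists]
      simpa [satCNF, List.all_eq_true] using hαbad
    have hle : ((φ.filter fun C => satClause α C).length : ℝ) ≤ (φ.length : ℝ) - 1 := by
      have := Nat.le_sub_one_of_lt hlt
      have h2 : ((φ.filter fun C => satClause α C).length : ℝ) + 1 ≤ (φ.length : ℝ) := by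
        exact_mod_cast hlt
      linarith
    unfold val
    rw [div_le_iff₀ hm]
    have : (1 - 1 / (φ.length : ℝ)) * (φ.length : ℝ) = (φ.length : ℝ) - 1 := by
      field_simp
    linarith
  rcases (seqVal φ '' {seq | IsReconfSeq s e seq}).eq_empty_or_nonempty with h | h
  · rw [optVal, h, Real.sSup_empty] at hopt
    norm_num at hopt
  · have := csSup_le h hub
    rw [optVal] at hopt
    rw [hopt] at this
    have : 0 < 1 / (φ.length : ℝ) := by positivity
    linarith

end auxlemmas


/-- Completeness of the padding reduction from E3-SAT Reconfiguration to
Ek-SAT Reconfiguration (`k ≥ 4`, `K := k - 3`): `ψ` is obtained by appending to each clause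
`C_j` of `φ` each of the `2^K` clauses `D` over the fresh variables `y₁, …, y_K` containing
every `yᵢ` exactly once, and `βs`, `βe` extend `αs`, `αe` by assigning `0` to every `yᵢ`.
If `opt_φ(αs ↔ αe) = 1`, then `opt_ψ(βs ↔ βe) = 1`. -/
theorem stmt8 {n k : ℕ} (hk : 4 ≤ k) (φ : CNF (Fin n))
    (h3 : ∀ C ∈ φ, C.length = 3)
    (αs αe : Assignment (Fin n)) (hs : satCNF αs φ) (he : satCNF αe φ)
    (ψ : CNF (Fin n ⊕ Fin (k - 3)))
    (hψ : ψ = φ.flatMap fun C =>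
        (Finset.univ : Finset (Fin (k - 3) → Bool)).toList.map fun b =>
          C.map (fun l => (Sum.inl l.1, l.2)) ++ List.ofFn fun i => (Sum.inr i, b i))
    (βs βe : Assignment (Fin n ⊕ Fin (k - 3)))
    (hβs : βs = Sum.elim αs fun _ => false)
    (hβe : βe = Sum.elim αe fun _ => false) :
    optVal φ αs αe = 1 → optVal ψ βs βe = 1 := by

  intro hopt
  by_cases hφ : φ = []
  · exfalso
    subst hφ
    have hall : ∀ x ∈ seqVal ([] : CNF (Fin n)) '' {seq | IsReconfSeq αs αe seq}, x = 0 := by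
      rintro x ⟨seq, hseq, rfl⟩
      have hne := hseq.1
      have himg : val ([] : CNF (Fin n)) '' {α | α ∈ seq} = {0} := by
        apply Set.eq_singleton_iff_nonempty_unique_mem.mpr
        constructor
        · obtain ⟨a, ha⟩ := List.exists_mem_of_ne_nil seq hne
          exact ⟨val [] a, ⟨a, ha, rfl⟩⟩
        · rintro y ⟨a, _, rfl⟩
          simp [val]
      rw [seqVal, himg, csInf_singleton]
    rcases (seqVal ([] : CNF (Fin n)) '' {seq | IsReconfSeq αs αe seq}).eq_empty_or_nonempty with h | h
    · rw [optVal, h, Real.sSup_empty] at hopt; norm_num at hopt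
    · have h1 : sSup (seqVal ([] : CNF (Fin n)) '' {seq | IsReconfSeq αs αe seq}) ≤ 0 :=
        csSup_le h (fun x hx => (hall x hx).le)
      rw [optVal] at hopt; linarith
  -- main case
  obtain ⟨seq, hseq, hsat⟩ := exists_good_seq hopt hφ
  -- lift
  set f : Assignment (Fin n) → Assignment (Fin n ⊕ Fin (k - 3)) :=
    fun α => Sum.elim α (fun _ => false) with hf
  have hψne : ψ ≠ [] := by
    obtain ⟨C, hC⟩ := List.exists_mem_of_ne_nil φ hφ
    have hb : (default : Fin (k-3) → Bool) ∈ (Finset.univ : Finset (Fin (k - 3) → Bool)).toList :=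
      Finset.mem_toList.mpr (Finset.mem_univ _)
    have : (C.map (fun l => (Sum.inl l.1, l.2)) ++ List.ofFn fun i => (Sum.inr i, (default : Fin (k-3) → Bool) i)) ∈ ψ := by
      rw [hψ, List.mem_flatMap]
      exact ⟨C, hC, List.mem_map.mpr ⟨default, hb, rfl⟩⟩
    exact fun h => by simp [h] at this
  have hsatψ : ∀ α ∈ seq, satCNF (f α) ψ := by
    intro α hα
    rw [satCNF, List.all_eq_true]
    intro D hD
    rw [hψ, List.mem_flatMap] at hD
    obtain ⟨C, hC, hD⟩ := hD
    rw [List.mem_map] at hD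
    obtain ⟨b, _, rfl⟩ := hD
    have hCsat : satClause α C := (List.all_eq_true.mp (hsat α hα)) C hC
    rw [satClause, List.any_eq_true] at hCsat ⊢
    obtain ⟨l, hl, hll⟩ := hCsat
    exact ⟨(Sum.inl l.1, l.2), List.mem_append_left _ (List.mem_map.mpr ⟨l, hl, rfl⟩), hll⟩
  -- lifted sequence is a reconf sequence
  have hlift : IsReconfSeq βs βe (seq.map f) := by
    obtain ⟨hne, hhd, hlast, hch⟩ := hseq
    refine ⟨by simpa using hne, ?_, ?_, ?_⟩
    · rw [List.head?_map, hhd, hβs]; rfl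
    · rw [List.getLast?_map, hlast, hβe]; rfl
    · rw [List.Chain', List.isChain_map]
      refine hch.imp ?_
      intro a b hab
      intro v w hv hw
      match v, w with
      | Sum.inl x, Sum.inl y =>
        have := hab x y (by simpa [hf] using hv) (by simpa [hf] using hw)
        exact congrArg Sum.inl this
      | Sum.inr x, _ => simp [hf] at hv
      | Sum.inl x, Sum.inr y => simp [hf] at hw
  have hval1 : seqVal ψ (seq.map f) = 1 := by
    have himg : val ψ '' {α | α ∈ seq.map f} = {1} := by
      apply Set.eq_singleton_iff_nonempty_unique_mem.mpr
      constructor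
      · obtain ⟨a, ha⟩ := List.exists_mem_of_ne_nil _ hlift.1
        exact ⟨val ψ a, ⟨a, ha, rfl⟩⟩
      · rintro y ⟨a, ha, rfl⟩
        simp only [Set.mem_setOf_eq, List.mem_map] at ha
        obtain ⟨α, hα, rfl⟩ := ha
        exact val_eq_one' hψne (hsatψ α hα)
    rw [seqVal, himg, csInf_singleton]
  have hbdd : BddAbove (seqVal ψ '' {sq | IsReconfSeq βs βe sq}) := by
    refine ⟨1, ?_⟩
    rintro x ⟨sq, hsq, rfl⟩
    exact seqVal_le_one' ψ hsq.1
  have hge : 1 ≤ optVal ψ βs βe := by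
    rw [optVal]
    rw [← hval1]
    exact le_csSup hbdd ⟨seq.map f, hlift, rfl⟩
  have hle : optVal ψ βs βe ≤ 1 := by
    rw [optVal]
    refine csSup_le ⟨seqVal ψ (seq.map f), ⟨seq.map f, hlift, rfl⟩⟩ ?_
    rintro x ⟨sq, hsq, rfl⟩
    exact seqVal_le_one' ψ hsq.1
  linarith
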